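/- arXiv:2110.07346 — 2 statements merged into one kernel-verified Lean document; each statement's English description precedes it below -/
import Mathlib

section
/- If a potential φ is sound for the game G (i.e., φ(v) ≤ En_G(v) for all v) and a potential φ' is sound for the modified game G_φ (i.e., φ'(v) ≤ En_{G_φ}(v) for all v), then the potential φ + φ' is sound for G, that is, φ(v) + φ'(v) ≤ En_G(v) for all v ∈ V. -/
attribute [local instance] Classical.propDecidable

/-- A game: a directed graph `E` on vertex set `V` with no sink, edge weights `wt : V → V → R`,
and a partition of the vertices into those belonging to Min (`isMin`) and to Max (the rest). -/
structure Game (V : Type) (R : Type) where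
  E : V → V → Prop
  wt : V → V → R
  isMin : V → Prop
  nosink : ∀ v, ∃ u, E v u

namespace Game

variable {V : Type} {R : Type}

/-- A strategy for Min: a choice of an outgoing edge at every Min vertex. -/
def MinStrat (G : Game V R) : Type := {σ : V → V // ∀ v, G.isMin v → G.E v (σ v)}

/-- A strategy for Max: a choice of an outgoing edge at every Max vertex. -/
def MaxStrat (G : Game V R) : Type := {τ : V → V // ∀ v, ¬ G.isMin v → G.E v (τ v)}

/-- An infinite path in the graph. -/
def IsPath (G : Game V R) (π : ℕ → V) : Prop := ∀ i, G.E (π i) (π (i + 1))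

/-- Consistency of an infinite path with a Min strategy. -/
def ConsMin (G : Game V R) (σ : G.MinStrat) (π : ℕ → V) : Prop :=
  ∀ i, G.isMin (π i) → π (i + 1) = σ.1 (π i)

/-- Consistency of an infinite path with a Max strategy. -/
def ConsMax (G : Game V R) (τ : G.MaxStrat) (π : ℕ → V) : Prop :=
  ∀ i, ¬ G.isMin (π i) → π (i + 1) = τ.1 (π i)

/-- Infinite paths starting in `v` consistent with the Min strategy `σ`. -/
def PlaysMin (G : Game V R) (σ : G.MinStrat) (v : V) : Type :=
  {π : ℕ → V // π 0 = v ∧ G.IsPath π ∧ G.ConsMin σ π}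

/-- Infinite paths starting in `v` consistent with the Max strategy `τ`. -/
def PlaysMax (G : Game V R) (τ : G.MaxStrat) (v : V) : Type :=
  {π : ℕ → V // π 0 = v ∧ G.IsPath π ∧ G.ConsMax τ π}

/-- The sequence of weights along an infinite path. -/
def wseq (G : Game V R) (π : ℕ → V) : ℕ → R := fun i => G.wt (π i) (π (i + 1))

/-- Embedding of `ℤ ∪ {∞}` into the extended reals. -/
noncomputable def toE (x : WithTop ℤ) : EReal :=
  if h : x = ⊤ then ⊤ else (((x.untop h : ℤ) : ℝ) : EReal)

/-- Embedding of `ℕ ∪ {∞}` into the extended reals. -/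
noncomputable def enatToE (x : ENat) : EReal :=
  if x = ⊤ then ⊤ else ((x.toNat : ℝ) : EReal)

/-- Conversion `ℤ ∪ {∞} → ℕ ∪ {∞}` (exact on non-negative values). -/
noncomputable def wToN (x : WithTop ℤ) : ENat :=
  if h : x = ⊤ then ⊤ else ((x.untop h).toNat : ENat)

/-- The mean-payoff valuation `MP(w₀w₁⋯) = limsup_k (1/k) ∑_{i<k} w_i`. -/
noncomputable def MPv (w : ℕ → ℤ) : EReal :=
  Filter.limsup
    (fun k : ℕ => ((((∑ i ∈ Finset.range k, w i : ℤ) : ℝ) / (k : ℝ) : ℝ) : EReal))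
    Filter.atTop

/-- The energy valuation `En(w₀w₁⋯) = sup_k ∑_{i<k} w_i` (weights given in `EReal`). -/
noncomputable def En (w : ℕ → EReal) : EReal :=
  ⨆ k : ℕ, ∑ i ∈ Finset.range k, w i

/-- The positive-energy valuation `En⁺(w₀w₁⋯) = ∑_{i<k¬} w_i ∈ ℕ ∪ {∞}` where `k¬` is the
first index of a negative weight (the whole, possibly infinite, sum if no weight is negative). -/
noncomputable def EnP (w : ℕ → WithTop ℤ) : ENat :=
  if h : ∃ k, w k < 0 then ∑ i ∈ Finset.range (Nat.find h), wToN (w i)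
  else ⨆ k : ℕ, ∑ i ∈ Finset.range k, wToN (w i)

/-- The mean-payoff value of a vertex:
`MP_G(v) = inf over Min strategies σ of sup over plays π from v consistent with σ of MP(w(π))`. -/
noncomputable def MPVal (G : Game V ℤ) (v : V) : EReal :=
  ⨅ σ : G.MinStrat, ⨆ π : G.PlaysMin σ v, MPv (G.wseq π.1)

/-- The energy value of a vertex. -/
noncomputable def EnVal (G : Game V (WithTop ℤ)) (v : V) : EReal :=
  ⨅ σ : G.MinStrat, ⨆ π : G.PlaysMin σ v, En (fun i => toE (G.wseq π.1 i))

/-- The positive-energy value of a vertex. -/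
noncomputable def EnPVal (G : Game V (WithTop ℤ)) (v : V) : ENat :=
  ⨅ σ : G.MinStrat, ⨆ π : G.PlaysMin σ v, EnP (G.wseq π.1)

/-- Lift a game with integer weights to a game with weights in `ℤ ∪ {∞}`. -/
def liftZ (G : Game V ℤ) : Game V (WithTop ℤ) :=
  { E := G.E, wt := fun u v => (G.wt u v : WithTop ℤ), isMin := G.isMin, nosink := G.nosink }

/-- The `φ`-modified weight: `w_φ(v,v') = w(v,v') + φ(v') − φ(v)` when `w(v,v')`, `φ(v)`, `φ(v')`
are all finite, and `∞` otherwise. -/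
noncomputable def modWt (w : V → V → WithTop ℤ) (φ : V → ENat) (u v : V) : WithTop ℤ :=
  if w u v = ⊤ ∨ φ u = ⊤ ∨ φ v = ⊤ then ⊤
  else (((w u v).untopD 0 + ((φ v).toNat : ℤ) - ((φ u).toNat : ℤ) : ℤ) : WithTop ℤ)

/-- The `φ`-modified game `G_φ`. -/
noncomputable def modify (G : Game V (WithTop ℤ)) (φ : V → ENat) : Game V (WithTop ℤ) :=
  { G with wt := modWt G.wt φ }

/-- `π 0 → π 1 → ⋯ → π k` is a simple cycle: `k ≥ 1`, consecutive edges, `π k = π 0`,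
and `π 0, …, π (k-1)` pairwise distinct. -/
def IsSimpleCycle (G : Game V R) (π : ℕ → V) (k : ℕ) : Prop :=
  1 ≤ k ∧ (∀ i < k, G.E (π i) (π (i + 1))) ∧ π k = π 0 ∧
    ∀ i < k, ∀ j < k, π i = π j → i = j

/-- A game is simple if every simple cycle has nonzero sum of weights. -/
def IsSimpleR [AddCommMonoid R] (G : Game V R) : Prop :=
  ∀ π k, IsSimpleCycle G π k → (∑ i ∈ Finset.range k, G.wt (π i) (π (i + 1))) ≠ 0

/-- `W = max_{e ∈ E} |w(e)|`. -/
noncomputable def maxW (G : Game V ℤ) [Fintype V] : ℕ :=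
  Finset.sup Finset.univ (fun p : V × V => if G.E p.1 p.2 then (G.wt p.1 p.2).natAbs else 0)

/-- The ESL iteration: `G₀ = G` and `G_{j+1} = (G_j)_{φ_j}` where `φ_j = En⁺_{G_j}`. -/
noncomputable def esl (G : Game V (WithTop ℤ)) : ℕ → Game V (WithTop ℤ)
  | 0 => G
  | j + 1 => modify (esl G j) (EnPVal (esl G j))

/-- The accumulated ESL potential `Φ_j = φ₀ + ⋯ + φ_{j−1}`. -/
noncomputable def eslPhi (G : Game V (WithTop ℤ)) (j : ℕ) (v : V) : ENat :=
  ∑ i ∈ Finset.range j, EnPVal (esl G i) v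

/-- The set of vertices from which Min can ensure to immediately visit a negative-weight edge:
Min vertices with some negative outgoing edge, and Max vertices all of whose outgoing edges
are negative. -/
def NegSet (G : Game V (WithTop ℤ)) : Set V :=
  {v | (G.isMin v ∧ ∃ u, G.E v u ∧ G.wt v u < 0) ∨
       (¬ G.isMin v ∧ ∀ u, G.E v u → G.wt v u < 0)}

end Game


namespace Game

variable {V : Type}

lemma toE_ne_bot (x : WithTop ℤ) : toE x ≠ ⊥ := by
  unfold toE; split
  · simp
  · exact EReal.coe_ne_bot _

lemma toE_int (z : ℤ) : toE (z : WithTop ℤ) = ((z : ℝ) : EReal) := by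
  unfold toE
  rw [dif_neg (WithTop.coe_ne_top)]
  rw [WithTop.untop_coe]

lemma toE_of_ne_top {x : WithTop ℤ} (h : x ≠ ⊤) :
    toE x = (((x.untopD 0 : ℤ) : ℝ) : EReal) := by
  obtain ⟨z, rfl⟩ := WithTop.ne_top_iff_exists.1 h
  rw [WithTop.untopD_coe, toE_int]

lemma sum_toE_ne_bot (s : Finset ℕ) (w : ℕ → WithTop ℤ) :
    (∑ i ∈ s, toE (w i)) ≠ ⊥ := by
  classical
  induction s using Finset.induction with
  | empty => simp
  | insert _ _ h ih =>
    rw [Finset.sum_insert h]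
    intro hc
    rcases EReal.add_eq_bot_iff.1 hc with h1 | h1
    · exact toE_ne_bot _ h1
    · exact ih h1

lemma sum_toE_eq_top {k j : ℕ} (hj : j < k) (w : ℕ → WithTop ℤ) (h : w j = ⊤) :
    (∑ i ∈ Finset.range k, toE (w i)) = ⊤ := by
  classical
  rw [← Finset.sum_erase_add _ _ (Finset.mem_range.2 hj)]
  have : toE (w j) = ⊤ := by unfold toE; rw [dif_pos h]
  rw [this]
  exact EReal.add_top_of_ne_bot (sum_toE_ne_bot _ _)

lemma enatToE_top : enatToE ⊤ = ⊤ := by simp [enatToE]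

lemma enatToE_of_ne_top {x : ENat} (h : x ≠ ⊤) :
    enatToE x = ((x.toNat : ℝ) : EReal) := by
  unfold enatToE; rw [if_neg h]

lemma enatToE_ne_bot (x : ENat) : enatToE x ≠ ⊥ := by
  by_cases h : x = ⊤
  · rw [h, enatToE_top]; simp
  · rw [enatToE_of_ne_top h]; exact EReal.coe_ne_bot _

lemma enatToE_ne_top_of_ne_top {x : ENat} (h : x ≠ ⊤) : enatToE x ≠ ⊤ := by
  rw [enatToE_of_ne_top h]; exact EReal.coe_ne_top _

lemma enatToE_add (a b : ENat) : enatToE (a + b) = enatToE a + enatToE b := by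
  by_cases ha : a = ⊤
  · rw [ha, enatToE_top, top_add b, enatToE_top,
      EReal.top_add_of_ne_bot (enatToE_ne_bot b)]
  · by_cases hb : b = ⊤
    · rw [hb, enatToE_top, add_top a, enatToE_top,
        EReal.add_top_of_ne_bot (enatToE_ne_bot a)]
    · rw [enatToE_of_ne_top ha, enatToE_of_ne_top hb,
        enatToE_of_ne_top (x := a + b) (WithTop.add_ne_top.2 ⟨ha, hb⟩)]
      rw [ENat.toNat_add ha hb]
      push_cast
      rfl

lemma coe_real_sum (s : Finset ℕ) (f : ℕ → ℝ) :
    ((∑ i ∈ s, f i : ℝ) : EReal) = ∑ i ∈ s, ((f i : ℝ) : EReal) := by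
  classical
  induction s using Finset.induction with
  | empty => simp
  | insert _ _ h ih => rw [Finset.sum_insert h, Finset.sum_insert h, EReal.coe_add, ih]

/-- Concatenating the first `k` steps of a play with a play from `π k` gives a play whose
partial sums dominate `S_k(π) + S_m(π')`. -/
lemma concat_le (G : Game V (WithTop ℤ)) (σ : G.MinStrat) (v : V)
    (π : G.PlaysMin σ v) (k : ℕ) (π' : G.PlaysMin σ (π.1 k)) (m : ℕ) :
    (∑ i ∈ Finset.range k, toE (G.wseq π.1 i)) +
      (∑ i ∈ Finset.range m, toE (G.wseq π'.1 i))
      ≤ ⨆ ρ : G.PlaysMin σ v, En (fun i => toE (G.wseq ρ.1 i)) := by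
  set f : ℕ → V := fun j => if j < k then π.1 j else π'.1 (j - k) with hf
  have hfk : ∀ j ≤ k, f j = π.1 j := by
    intro j hj
    by_cases h : j < k
    · simp [hf, h]
    · have hjk : j = k := le_antisymm hj (not_lt.1 h)
      subst hjk
      simp only [hf, lt_self_iff_false, if_false, Nat.sub_self]
      exact π'.2.1
  have hfk' : ∀ j, f (k + j) = π'.1 j := by
    intro j
    simp only [hf, Nat.add_sub_cancel_left, if_neg (by omega : ¬ k + j < k)]
  have hf0 : f 0 = v := by rw [hfk 0 (Nat.zero_le k)]; exact π.2.1
  have hpath : G.IsPath f := by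
    intro i
    by_cases h : i + 1 ≤ k
    · rw [hfk i (by omega), hfk (i + 1) h]
      exact π.2.2.1 i
    · obtain ⟨j, rfl⟩ := Nat.exists_eq_add_of_le (by omega : k ≤ i)
      rw [hfk' j, show k + j + 1 = k + (j + 1) by ring, hfk' (j + 1)]
      exact π'.2.2.1 j
  have hcons : G.ConsMin σ f := by
    intro i hi
    by_cases h : i + 1 ≤ k
    · rw [hfk i (by omega)] at hi ⊢
      rw [hfk (i + 1) h]
      exact π.2.2.2 i hi
    · obtain ⟨j, rfl⟩ := Nat.exists_eq_add_of_le (by omega : k ≤ i)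
      rw [hfk' j] at hi ⊢
      rw [show k + j + 1 = k + (j + 1) by ring, hfk' (j + 1)]
      exact π'.2.2.2 j hi
  have hsum : ∑ i ∈ Finset.range (k + m), toE (G.wseq f i)
      = (∑ i ∈ Finset.range k, toE (G.wseq π.1 i)) +
        (∑ i ∈ Finset.range m, toE (G.wseq π'.1 i)) := by
    rw [Finset.sum_range_add]
    congr 1
    · refine Finset.sum_congr rfl fun i hi => ?_
      rw [Finset.mem_range] at hi
      unfold wseq
      rw [hfk i hi.le, hfk (i + 1) hi]
    · refine Finset.sum_congr rfl fun i _ => ?_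
      unfold wseq
      rw [hfk' i, show k + i + 1 = k + (i + 1) by ring, hfk' (i + 1)]
  rw [← hsum]
  calc ∑ i ∈ Finset.range (k + m), toE (G.wseq f i)
      ≤ En (fun i => toE (G.wseq f i)) :=
        le_iSup (fun n => ∑ i ∈ Finset.range n, toE (G.wseq f i)) (k + m)
    _ ≤ ⨆ ρ : G.PlaysMin σ v, En (fun i => toE (G.wseq ρ.1 i)) :=
        le_iSup (fun ρ : G.PlaysMin σ v => En (fun i => toE (G.wseq ρ.1 i)))
          ⟨f, hf0, hpath, hcons⟩

/-- Continuation: the value `φ (π k)` of a sound potential can be added to the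
partial sum `S_k(π)` and still be dominated by the value at `v` for strategy `σ`. -/
lemma cont_le (G : Game V (WithTop ℤ)) (φ : V → ENat)
    (hφ : ∀ v, enatToE (φ v) ≤ EnVal G v)
    (σ : G.MinStrat) (v : V) (π : G.PlaysMin σ v) (k : ℕ) :
    (∑ i ∈ Finset.range k, toE (G.wseq π.1 i)) + enatToE (φ (π.1 k))
      ≤ ⨆ ρ : G.PlaysMin σ v, En (fun i => toE (G.wseq ρ.1 i)) := by
  set A := ⨆ ρ : G.PlaysMin σ v, En (fun i => toE (G.wseq ρ.1 i)) with hA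
  set S := ∑ i ∈ Finset.range k, toE (G.wseq π.1 i) with hS
  have hSbot : S ≠ ⊥ := sum_toE_ne_bot _ _
  by_cases hStop : S = ⊤
  · have htop : (⊤ : EReal) ≤ A := by
      calc (⊤ : EReal) = S := hStop.symm
        _ ≤ En (fun i => toE (G.wseq π.1 i)) :=
            le_iSup (fun n => ∑ i ∈ Finset.range n, toE (G.wseq π.1 i)) k
        _ ≤ A := le_iSup (fun ρ : G.PlaysMin σ v => En (fun i => toE (G.wseq ρ.1 i))) π
    rw [hStop, EReal.top_add_of_ne_bot (enatToE_ne_bot _)]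
    exact htop
  · rw [add_comm, ← EReal.le_sub_iff_add_le (Or.inl hSbot) (Or.inl hStop)]
    have h1 : enatToE (φ (π.1 k))
        ≤ ⨆ π' : G.PlaysMin σ (π.1 k), En (fun i => toE (G.wseq π'.1 i)) :=
      (hφ _).trans (iInf_le _ σ)
    refine h1.trans (iSup_le fun π' => ?_)
    unfold En
    refine iSup_le fun m => ?_
    rw [EReal.le_sub_iff_add_le (Or.inl hSbot) (Or.inl hStop), add_comm]
    exact concat_le G σ v π k π' m

end Game

open Game

/-- Composition of sound potentials: if `φ` is sound for `G` and `φ'` is sound for `G_φ`,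
then `φ + φ'` is sound for `G`. -/
theorem sound_composition {V : Type} [Fintype V] (G : Game V (WithTop ℤ))
    (φ φ' : V → ENat)
    (hφ : ∀ v, enatToE (φ v) ≤ EnVal G v)
    (hφ' : ∀ v, enatToE (φ' v) ≤ EnVal (modify G φ) v) :
    ∀ v, enatToE (φ v + φ' v) ≤ EnVal G v := by
  intro v
  unfold EnVal
  refine le_iInf fun σ => ?_
  set A := ⨆ π : G.PlaysMin σ v, En (fun i => toE (G.wseq π.1 i)) with hA
  by_cases hv : φ v = ⊤
  · refine le_top.trans ?_
    have h1 := hφ v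
    rw [hv, enatToE_top] at h1
    exact h1.trans (iInf_le _ σ)
  · rw [enatToE_add]
    set σ' : (modify G φ).MinStrat := ⟨σ.1, σ.2⟩ with hσ'
    have hB : enatToE (φ' v)
        ≤ ⨆ π : (modify G φ).PlaysMin σ' v,
            En (fun i => toE ((modify G φ).wseq π.1 i)) :=
      (hφ' v).trans (iInf_le _ σ')
    have key : ∀ (π : (modify G φ).PlaysMin σ' v) (m : ℕ),
        (∑ i ∈ Finset.range m, toE ((modify G φ).wseq π.1 i)) + enatToE (φ v) ≤ A := by
      intro π m
      let πG : G.PlaysMin σ v := ⟨π.1, π.2.1, π.2.2.1, π.2.2.2⟩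
      have hπ1 : πG.1 = π.1 := rfl
      by_cases hT : ∃ i ≤ m, φ (π.1 i) = ⊤
      · obtain ⟨i, him, hi⟩ := hT
        refine le_top.trans ?_
        have h2 := cont_le G φ hφ σ v πG i
        rw [hπ1, hi, enatToE_top, EReal.add_top_of_ne_bot (sum_toE_ne_bot _ _)] at h2
        exact h2
      · by_cases hW : ∃ i < m, G.wt (π.1 i) (π.1 (i + 1)) = ⊤
        · obtain ⟨i, him, hi⟩ := hW
          refine le_top.trans ?_
          have hStop : (∑ j ∈ Finset.range m, toE (G.wseq π.1 j)) = ⊤ :=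
            sum_toE_eq_top him (G.wseq π.1) hi
          calc (⊤ : EReal) = ∑ j ∈ Finset.range m, toE (G.wseq π.1 j) := hStop.symm
            _ ≤ En (fun i => toE (G.wseq π.1 i)) :=
                le_iSup (fun n => ∑ j ∈ Finset.range n, toE (G.wseq π.1 j)) m
            _ ≤ A := le_iSup (fun ρ : G.PlaysMin σ v => En (fun i => toE (G.wseq ρ.1 i))) πG
        · push_neg at hT hW
          -- all weights and potentials along the prefix are finite
          set n : ℕ → ℕ := fun i => (φ (π.1 i)).toNat with hn
          set z : ℕ → ℤ := fun i => (G.wt (π.1 i) (π.1 (i + 1))).untopD 0 with hz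
          have hmod : ∀ i < m, toE ((modify G φ).wseq π.1 i)
              = (((z i + (n (i + 1) : ℤ) - (n i : ℤ) : ℤ) : ℝ) : EReal) := by
            intro i hi
            have h1 : G.wt (π.1 i) (π.1 (i + 1)) ≠ ⊤ := hW i hi
            have h2 : φ (π.1 i) ≠ ⊤ := hT i hi.le
            have h3 : φ (π.1 (i + 1)) ≠ ⊤ := hT (i + 1) hi
            show toE (modWt G.wt φ (π.1 i) (π.1 (i + 1))) = _
            unfold modWt
            rw [if_neg (by push_neg; exact ⟨h1, h2, h3⟩)]
            rw [toE_int]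
          have hw : ∀ i < m, toE (G.wseq π.1 i) = (((z i : ℤ) : ℝ) : EReal) := by
            intro i hi
            exact toE_of_ne_top (hW i hi)
          have hSφ : (∑ i ∈ Finset.range m, toE ((modify G φ).wseq π.1 i))
              = (((∑ i ∈ Finset.range m, z i + (n m : ℤ) - (n 0 : ℤ) : ℤ) : ℝ) : EReal) := by
            rw [Finset.sum_congr rfl fun i hi => hmod i (Finset.mem_range.1 hi)]
            rw [show ((∑ i ∈ Finset.range m, z i + (n m : ℤ) - (n 0 : ℤ) : ℤ) : ℝ)
                = ∑ i ∈ Finset.range m, ((z i + (n (i + 1) : ℤ) - (n i : ℤ) : ℤ) : ℝ) by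
              push_cast
              have h4 : ∑ i ∈ Finset.range m, ((z i : ℝ) + (n (i + 1) : ℝ) - (n i : ℝ))
                  = ∑ i ∈ Finset.range m, ((z i : ℝ) + ((n (i + 1) : ℝ) - (n i : ℝ))) :=
                Finset.sum_congr rfl fun i _ => by ring
              rw [h4, Finset.sum_add_distrib, Finset.sum_range_sub (fun i => (n i : ℝ))]
              ring]
            exact (coe_real_sum _ _).symm
          have hSw : (∑ i ∈ Finset.range m, toE (G.wseq π.1 i))
              = (((∑ i ∈ Finset.range m, z i : ℤ) : ℝ) : EReal) := by
            rw [Finset.sum_congr rfl fun i hi => hw i (Finset.mem_range.1 hi)]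
            rw [show ((∑ i ∈ Finset.range m, z i : ℤ) : ℝ)
                = ∑ i ∈ Finset.range m, ((z i : ℤ) : ℝ) by push_cast; rfl]
            exact (coe_real_sum _ _).symm
          have hcont := cont_le G φ hφ σ v πG m
          rw [hπ1, hSw, enatToE_of_ne_top (hT m le_rfl)] at hcont
          have hv0 : φ v = φ (π.1 0) := by rw [π.2.1]
          rw [hSφ, enatToE_of_ne_top (by rw [hv0]; exact hT 0 (Nat.zero_le m))]
          refine le_trans (le_of_eq ?_) hcont
          rw [← EReal.coe_add, ← EReal.coe_add]
          norm_cast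
          show (∑ i ∈ Finset.range m, z i + (n m : ℤ) - (n 0 : ℤ)) + ((φ v).toNat : ℤ)
              = ∑ i ∈ Finset.range m, z i + ((φ (πG.1 m)).toNat : ℤ)
          rw [hv0]
          show _ + (n 0 : ℤ) = _ + (n m : ℤ)
          ring
    have hc : enatToE (φ v) ≠ ⊤ := enatToE_ne_top_of_ne_top hv
    have hcb : enatToE (φ v) ≠ ⊥ := enatToE_ne_bot _
    rw [add_comm, ← EReal.le_sub_iff_add_le (Or.inl hcb) (Or.inl hc)]
    refine hB.trans (iSup_le fun π => ?_)
    unfold En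
    refine iSup_le fun m => ?_
    rw [EReal.le_sub_iff_add_le (Or.inl hcb) (Or.inl hc)]
    exact key π m
end

section
/- Correctness of the ESL fixed point: let G be a game with integer weights and let G₀ = G, φ_j = En⁺_{G_j}, G_{j+1} = (G_j)_{φ_j}, Φ_j = φ₀ + ⋯ + φ_{j−1}. If Φ_{j+1} = Φ_j, then for every vertex v ∈ V, En_{G_j}(v) ∈ {0, ∞}. -/
attribute [local instance] Classical.propDecidable

open Game

namespace Game

variable {V : Type}

/-- Follow a Min strategy at Min vertices, an arbitrary edge at Max vertices. -/
noncomputable def follow (G : Game V (WithTop ℤ)) (σ : G.MinStrat) (v : V) : V :=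
  if G.isMin v then σ.1 v else Classical.choose (G.nosink v)

lemma follow_edge (G : Game V (WithTop ℤ)) (σ : G.MinStrat) (v : V) :
    G.E v (G.follow σ v) := by
  unfold follow; split
  · exact σ.2 v ‹_›
  · exact Classical.choose_spec (G.nosink v)

lemma follow_min (G : Game V (WithTop ℤ)) (σ : G.MinStrat) (v : V) (h : G.isMin v) :
    G.follow σ v = σ.1 v := if_pos h

/-- The play which starts `v → u` then follows `σ`. -/
noncomputable def playCons (G : Game V (WithTop ℤ)) (σ : G.MinStrat) (v u : V) : ℕ → V
  | 0 => v
  | n + 1 => (G.follow σ)^[n] u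

lemma playCons_mem (G : Game V (WithTop ℤ)) (σ : G.MinStrat) (v u : V)
    (he : G.E v u) (hu : G.isMin v → u = σ.1 v) :
    playCons G σ v u 0 = v ∧ G.IsPath (playCons G σ v u) ∧ G.ConsMin σ (playCons G σ v u) := by
  refine ⟨rfl, ?_, ?_⟩
  · intro i
    cases i with
    | zero => exact he
    | succ n =>
      show G.E ((G.follow σ)^[n] u) ((G.follow σ)^[n+1] u)
      rw [Function.iterate_succ_apply']
      exact follow_edge G σ _
  · intro i hmin
    cases i with
    | zero => exact hu hmin
    | succ n =>
      show (G.follow σ)^[n+1] u = σ.1 ((G.follow σ)^[n] u)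
      rw [Function.iterate_succ_apply']
      exact follow_min G σ _ hmin

lemma playsMin_nonempty (G : Game V (WithTop ℤ)) (σ : G.MinStrat) (v : V) :
    Nonempty (G.PlaysMin σ v) :=
  ⟨⟨playCons G σ v (G.follow σ v),
    playCons_mem G σ v _ (follow_edge G σ v) (fun h => follow_min G σ v h)⟩⟩

lemma wToN_eq_zero {x : WithTop ℤ} (hx : wToN x = 0) : x ≤ 0 := by
  unfold wToN at hx
  split at hx
  · exact absurd hx (by simp)
  · rename_i h
    have h1 : (x.untop h).toNat = 0 := by exact_mod_cast hx
    have h2 : x.untop h ≤ 0 := Int.toNat_eq_zero.1 h1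
    calc x = ((x.untop h : ℤ) : WithTop ℤ) := (WithTop.coe_untop x h).symm
    _ ≤ ((0:ℤ) : WithTop ℤ) := WithTop.coe_le_coe.2 h2
    _ = 0 := rfl

lemma EnP_zero_first {w : ℕ → WithTop ℤ} (h : EnP w = 0) : w 0 ≤ 0 := by
  unfold EnP at h
  split at h
  · rename_i hex
    rcases Nat.eq_zero_or_pos (Nat.find hex) with h0 | h0
    · have := Nat.find_spec hex
      rw [h0] at this
      exact this.le
    · have hz : wToN (w 0) = 0 :=
        (Finset.sum_eq_zero_iff.1 h) 0 (Finset.mem_range.2 h0)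
      exact wToN_eq_zero hz
  · have h1 : ∑ i ∈ Finset.range 1, wToN (w i) = 0 :=
      le_antisymm (h ▸ le_iSup (fun k => ∑ i ∈ Finset.range k, wToN (w i)) 1) zero_le
    rw [Finset.sum_range_one] at h1
    exact wToN_eq_zero h1

lemma exists_strat_of_EnPVal_zero (G : Game V (WithTop ℤ)) (v : V) (h : EnPVal G v = 0) :
    ∃ σ : G.MinStrat, ∀ π : G.PlaysMin σ v, EnP (G.wseq π.1) = 0 := by
  by_contra hc
  push_neg at hc
  have h1 : (1 : ENat) ≤ EnPVal G v := by
    apply le_iInf; intro σ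
    obtain ⟨π, hπ⟩ := hc σ
    exact le_iSup_of_le π (ENat.one_le_iff_ne_zero.2 hπ)
  rw [h] at h1
  simp at h1

lemma min_good (G : Game V (WithTop ℤ)) (v : V) (hm : G.isMin v) (h : EnPVal G v = 0) :
    ∃ u, G.E v u ∧ G.wt v u ≤ 0 := by
  obtain ⟨σ, hσ⟩ := exists_strat_of_EnPVal_zero G v h
  refine ⟨σ.1 v, σ.2 v hm, ?_⟩
  have hmem := playCons_mem G σ v (σ.1 v) (σ.2 v hm) (fun _ => rfl)
  have h0 := EnP_zero_first (hσ ⟨_, hmem⟩)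
  exact h0

lemma max_good (G : Game V (WithTop ℤ)) (v : V) (hm : ¬ G.isMin v) (h : EnPVal G v = 0) :
    ∀ u, G.E v u → G.wt v u ≤ 0 := by
  intro u he
  obtain ⟨σ, hσ⟩ := exists_strat_of_EnPVal_zero G v h
  have hmem := playCons_mem G σ v u he (fun hmin => absurd hmin hm)
  exact EnP_zero_first (hσ ⟨_, hmem⟩)

lemma En_nonneg (w : ℕ → EReal) : 0 ≤ En w := by
  have := le_iSup (fun k => ∑ i ∈ Finset.range k, w i) 0
  simp at this; exact this

lemma EnVal_nonneg (G : Game V (WithTop ℤ)) (v : V) : 0 ≤ EnVal G v := by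
  apply le_iInf; intro σ
  obtain ⟨π⟩ := playsMin_nonempty G σ v
  exact le_iSup_of_le π (En_nonneg _)

lemma toE_nonpos {x : WithTop ℤ} (h : x ≤ 0) : toE x ≤ 0 := by
  unfold toE
  split
  · rename_i ht; rw [ht] at h; exact absurd h (by simp)
  · rename_i ht
    have h2 : x.untop ht ≤ 0 := by
      have hc := WithTop.coe_untop x ht
      rw [← hc] at h
      exact_mod_cast h
    exact EReal.coe_nonpos.2 (by exact_mod_cast h2)

lemma En_nonpos {w : ℕ → EReal} (h : ∀ i, w i ≤ 0) : En w ≤ 0 :=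
  iSup_le fun _ => Finset.sum_nonpos fun i _ => h i

lemma EnVal_top (G : Game V (WithTop ℤ)) (v : V) (h : ∀ u, G.wt v u = ⊤) : EnVal G v = ⊤ := by
  rw [eq_top_iff]
  apply le_iInf; intro σ
  obtain ⟨π⟩ := playsMin_nonempty G σ v
  refine le_trans ?_ (le_iSup _ π)
  have h1 : toE (G.wseq π.1 0) = ⊤ := by
    show toE (G.wt (π.1 0) (π.1 1)) = ⊤
    rw [π.2.1, h (π.1 1)]
    exact dif_pos rfl
  calc (⊤:EReal) = ∑ i ∈ Finset.range 1, toE (G.wseq π.1 i) := by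
        rw [Finset.sum_range_one, h1]
    _ ≤ En _ := le_iSup (fun k => ∑ i ∈ Finset.range k, toE (G.wseq π.1 i)) 1

lemma esl_isMin (G : Game V (WithTop ℤ)) (j : ℕ) : (esl G j).isMin = G.isMin := by
  induction j with
  | zero => rfl
  | succ n ih => exact ih

lemma esl_E (G : Game V (WithTop ℤ)) (j : ℕ) : (esl G j).E = G.E := by
  induction j with
  | zero => rfl
  | succ n ih => exact ih

lemma esl_wt_top (G : Game V (WithTop ℤ)) {m : ℕ} {a b : V} (h : (esl G m).wt a b = ⊤) :
    (esl G (m+1)).wt a b = ⊤ := by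
  show modWt (esl G m).wt _ a b = ⊤
  unfold modWt
  rw [if_pos (Or.inl h)]

lemma esl_wt_top_of_phi (G : Game V (WithTop ℤ)) {i : ℕ} {v : V}
    (h : EnPVal (esl G i) v = ⊤) :
    ∀ j, i < j → ∀ x, (esl G j).wt v x = ⊤ ∧ (esl G j).wt x v = ⊤ := by
  intro j hij
  induction j, hij using Nat.le_induction with
  | base =>
    intro x
    constructor
    · show modWt (esl G i).wt (EnPVal (esl G i)) v x = ⊤
      unfold modWt
      rw [if_pos (Or.inr (Or.inl h))]
    · show modWt (esl G i).wt (EnPVal (esl G i)) x v = ⊤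
      unfold modWt
      rw [if_pos (Or.inr (Or.inr h))]
  | succ n hn ih =>
    intro x
    exact ⟨esl_wt_top G (ih x).1, esl_wt_top G (ih x).2⟩

lemma phi_step {a b : ENat} (ha : a ≠ ⊤) (h : a + b = a) : b = 0 :=
  WithTop.add_left_cancel ha (h.trans (add_zero a).symm)

end Game

/-- Correctness of the ESL fixed point: if `Φ_{j+1} = Φ_j` then all energy values of `G_j`
are `0` or `∞`. -/
theorem esl_fixed_point_correct {V : Type} [Fintype V] (G : Game V ℤ) (j : ℕ)
    (h : eslPhi (liftZ G) (j + 1) = eslPhi (liftZ G) j) :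
    ∀ v : V, EnVal (esl (liftZ G) j) v = 0 ∨ EnVal (esl (liftZ G) j) v = ⊤ := by
  set H := esl (liftZ G) j with hH
  -- a vertex is "bad" if some earlier round gave it an infinite potential
  set B : V → Prop := fun v => ∃ i, i < j ∧ EnPVal (esl (liftZ G) i) v = ⊤ with hB
  -- the pointwise consequence of the fixed-point hypothesis
  have hpt : ∀ v, ¬ B v → EnPVal H v = 0 := by
    intro v hv
    have htop : eslPhi (liftZ G) j v ≠ ⊤ := by
      intro hc
      unfold eslPhi at hc
      have hlt : ¬ (∑ i ∈ Finset.range j, EnPVal (esl (liftZ G) i) v < ⊤) := by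
        rw [hc]; exact lt_irrefl _
      rw [ENat.sum_lt_top] at hlt
      push_neg at hlt
      obtain ⟨i, hi, hitop⟩ := hlt
      exact hv ⟨i, Finset.mem_range.1 hi, by simpa using hitop⟩
    have hv2 := congrFun h v
    unfold eslPhi at hv2 htop
    rw [Finset.sum_range_succ] at hv2
    exact phi_step htop hv2
  -- edges touching a bad vertex have weight ⊤ in `H`
  have hBtop : ∀ v, B v → ∀ x, H.wt v x = ⊤ ∧ H.wt x v = ⊤ := by
    intro v hv x
    obtain ⟨i, hij, hi⟩ := hv
    exact esl_wt_top_of_phi (liftZ G) hi j hij x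
  have hStep : ∀ v x, H.wt v x ≤ 0 → ¬ B x := by
    intro v x hle hc
    rw [(hBtop x hc v).2] at hle
    exact absurd hle (by simp)
  intro v
  by_cases hBv : B v
  · right
    exact EnVal_top H v (fun u => (hBtop v hBv u).1)
  · left
    -- build the Min strategy taking nonpositive edges at good Min vertices
    have choice : ∀ w : V, ∃ u, H.E w u ∧ (H.isMin w ∧ ¬ B w → H.wt w u ≤ 0) := by
      intro w
      by_cases hw : H.isMin w ∧ ¬ B w
      · obtain ⟨u, he, hle⟩ := min_good H w hw.1 (hpt w hw.2)
        exact ⟨u, he, fun _ => hle⟩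
      · obtain ⟨u, he⟩ := H.nosink w
        exact ⟨u, he, fun hc => absurd hc hw⟩
    choose f hf1 hf2 using choice
    have hle0 : EnVal H v ≤ 0 := by
      refine le_trans (iInf_le _ (⟨f, fun w _ => hf1 w⟩ : H.MinStrat)) ?_
      apply iSup_le
      intro π
      have wle : ∀ n, ¬ B (π.1 n) → H.wt (π.1 n) (π.1 (n+1)) ≤ 0 := by
        intro n hn
        by_cases hm : H.isMin (π.1 n)
        · have heq : π.1 (n+1) = f (π.1 n) := π.2.2.2 n hm
          rw [heq]
          exact hf2 _ ⟨hm, hn⟩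
        · exact max_good H _ hm (hpt _ hn) _ (π.2.2.1 n)
      have notB : ∀ n, ¬ B (π.1 n) := by
        intro n
        induction n with
        | zero => rw [π.2.1]; exact hBv
        | succ n ih => exact hStep _ _ (wle n ih)
      apply En_nonpos
      intro i
      exact toE_nonpos (show H.wseq π.1 i ≤ 0 from wle i (notB i))
    exact le_antisymm hle0 (EnVal_nonneg H v)
end
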